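/- Let 0 < r < 1, let u ∈ ℂ with Im u > 0, set ρ = |u|, w = (1 − ū)/(1−r²), z = (1 − r²/ū)/(1−r²), and A(ζ) = −ζ·arg(ζ) − (1−ζ)·arg(1−ζ). Then r² Im(w) + ρ² Im(z) = 0, and consequently the quantity r² A(w) − u ū A(z) is real. -/

import Mathlib

open Real Complex

/-- `A(ζ) = −ζ·arg(ζ) − (1−ζ)·arg(1−ζ)`. -/
noncomputable def Afun (ζ : ℂ) : ℂ :=
  -ζ * (Complex.arg ζ : ℂ) - (1 - ζ) * (Complex.arg (1 - ζ) : ℂ)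

theorem rsqA_real (r : ℝ) (hr0 : 0 < r) (hr1 : r < 1)
    (u : ℂ) (hu : 0 < u.im)
    (w z : ℂ)
    (hw : w = (1 - (starRingEnd ℂ) u) / (1 - (r : ℂ) ^ 2))
    (hz : z = (1 - (r : ℂ) ^ 2 / (starRingEnd ℂ) u) / (1 - (r : ℂ) ^ 2)) :
    r ^ 2 * w.im + ‖u‖ ^ 2 * z.im = 0 ∧
    ((r : ℂ) ^ 2 * Afun w - u * (starRingEnd ℂ) u * Afun z).im = 0 := by
  have hu0 : u ≠ 0 := fun h => by simp [h] at hu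
  have hcu0 : (starRingEnd ℂ) u ≠ 0 := by simpa using hu0
  have hr2 : (0:ℝ) < 1 - r ^ 2 := by nlinarith
  have hcast : (1 : ℂ) - (r : ℂ) ^ 2 = ((1 - r ^ 2 : ℝ) : ℂ) := by push_cast; ring
  have hrr : ((r : ℂ) ^ 2) = ((r ^ 2 : ℝ) : ℂ) := by push_cast; ring
  have hr2' : (1 : ℂ) - (r : ℂ) ^ 2 ≠ 0 := by
    rw [hcast]
    exact_mod_cast hr2.ne'
  have habs : (0:ℝ) < ‖u‖ ^ 2 := pow_pos (norm_pos_iff.mpr hu0) 2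
  have hnsq : Complex.normSq u = ‖u‖ ^ 2 := (Complex.sq_norm u).symm
  -- imaginary parts
  have hwim : w.im = u.im / (1 - r ^ 2) := by
    rw [hw, hcast, Complex.div_ofReal_im]
    simp
  have hwim0 : 0 < w.im := by
    rw [hwim]; positivity
  have hzim : z.im = -(r ^ 2 * u.im) / (‖u‖ ^ 2 * (1 - r ^ 2)) := by
    rw [hz, hcast, Complex.div_ofReal_im]
    have h5 : ((r : ℂ) ^ 2 / (starRingEnd ℂ) u).im
        = r ^ 2 * u.im / ‖u‖ ^ 2 := by
      rw [hrr, Complex.div_im]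
      simp [Complex.normSq_conj, hnsq, ← Complex.ofReal_pow]
      ring
    rw [Complex.sub_im, h5, Complex.one_im, ← div_div]
    ring
  have hr2u : 0 < r ^ 2 * u.im := by positivity
  have hzim0 : z.im < 0 := by
    rw [hzim]
    apply div_neg_of_neg_of_pos
    · linarith
    · positivity
  have him : r ^ 2 * w.im + ‖u‖ ^ 2 * z.im = 0 := by
    rw [hwim, hzim]
    field_simp
    ring
  refine ⟨him, ?_⟩
  -- nonvanishing
  have hw0 : w ≠ 0 := fun h => by simp [h] at hwim0
  have hz0 : z ≠ 0 := fun h => by simp [h] at hzim0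
  have h1w : (1 - w).im < 0 := by simp [hwim0]
  have h1z : (1 - z).im > 0 := by simp; linarith
  have h1w0 : 1 - w ≠ 0 := fun h => by simp [h] at h1w
  have h1z0 : 1 - z ≠ 0 := fun h => by simp [h] at h1z
  -- the product identity
  have hprod : (1 - w) * (1 - z) = ((r ^ 2 : ℝ) : ℂ) * (w * z) := by
    rw [hw, hz]
    field_simp
    push_cast
    ring
  -- angle equality
  have hangle : ((arg (1 - w) + arg (1 - z) : ℝ) : Real.Angle)
      = ((arg w + arg z : ℝ) : Real.Angle) := by
    have h1 : ((arg ((1 - w) * (1 - z)) : ℝ) : Real.Angle)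
        = (arg (1-w) : ℝ) + (arg (1-z) : ℝ) :=
      Complex.arg_mul_coe_angle h1w0 h1z0
    have h2 : ((arg (w * z) : ℝ) : Real.Angle) = (arg w : ℝ) + (arg z : ℝ) :=
      Complex.arg_mul_coe_angle hw0 hz0
    have h3 : arg ((1 - w) * (1 - z)) = arg (w * z) := by
      rw [hprod]
      exact Complex.arg_real_mul _ (by positivity)
    rw [Real.Angle.coe_add, Real.Angle.coe_add, ← h1, ← h2, h3]
  -- from angle equality to real equality using bounds
  obtain ⟨k, hk⟩ := Real.Angle.angle_eq_iff_two_pi_dvd_sub.mp hangle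
  have hb1 : arg (1 - w) < 0 := Complex.arg_neg_iff.mpr h1w
  have hb2 : -π < arg (1 - w) := Complex.neg_pi_lt_arg _
  have hb3 : 0 ≤ arg (1 - z) := Complex.arg_nonneg_iff.mpr h1z.le
  have hb4 : arg (1 - z) ≤ π := Complex.arg_le_pi _
  have hb5 : 0 ≤ arg w := Complex.arg_nonneg_iff.mpr hwim0.le
  have hb6 : arg w ≤ π := Complex.arg_le_pi _
  have hb7 : arg z < 0 := Complex.arg_neg_iff.mpr hzim0
  have hb8 : -π < arg z := Complex.neg_pi_lt_arg _
  have hpi : 0 < π := Real.pi_pos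
  have hk0 : k = 0 := by
    rcases lt_trichotomy k 0 with h | h | h
    · have hk1 : (k : ℝ) ≤ -1 := by exact_mod_cast (by omega : k ≤ -1)
      have h2 : 2 * π * (k : ℝ) ≤ -(2 * π) := by nlinarith
      linarith [hk]
    · exact h
    · have hk1 : (1 : ℝ) ≤ (k : ℝ) := by exact_mod_cast h
      have h2 : 2 * π ≤ 2 * π * (k : ℝ) := by nlinarith
      linarith [hk]
  have hsum : arg (1 - w) + arg (1 - z) - (arg w + arg z) = 0 := by
    rw [hk, hk0]; simp
  -- final computation
  have hA : ∀ ζ : ℂ, (Afun ζ).im = -ζ.im * arg ζ + ζ.im * arg (1 - ζ) := by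
    intro ζ
    simp [Afun, Complex.sub_im, Complex.mul_im]
  rw [Complex.mul_conj, Complex.sub_im, hrr]
  simp only [Complex.mul_im, Complex.ofReal_re, Complex.ofReal_im, zero_mul, add_zero]
  rw [hA, hA, hnsq]
  linear_combination (r ^ 2 * w.im) * hsum + (arg z - arg (1 - z)) * him
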